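/- If U ⊆ λ(Φ) is an irreducible hitting set of the collection coLMNS(Φ) of all co-LMNSes of Φ, then U is an LMES of Φ. (Assume λ(Φ) ≠ ∅, and if Φ has unlabelled clauses then at least one label of Φ is irredundant.) -/

import Mathlib

namespace LCNFStmt

/-- A clause is a finite set of literals (variable, polarity). -/
abbrev Clause (V : Type) := Finset (V × Bool)

def ClauseSat {V : Type} (τ : V → Bool) (c : Clause V) : Prop :=
  ∃ p ∈ c, τ p.1 = p.2

/-- τ is a model of a CNF formula (finite set of clauses). -/
def Sat {V : Type} (τ : V → Bool) (F : Finset (Clause V)) : Prop :=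
  ∀ c ∈ F, ClauseSat τ c

/-- Logical equivalence of CNF formulas: same models. -/
def Equiv {V : Type} (F₁ F₂ : Finset (Clause V)) : Prop :=
  ∀ τ, Sat τ F₁ ↔ Sat τ F₂

/-- F₁ implies F₂: every model of F₁ is a model of F₂. -/
def Implies {V : Type} (F₁ F₂ : Finset (Clause V)) : Prop :=
  ∀ τ, Sat τ F₁ → Sat τ F₂

/-- A labelled CNF formula: a CNF formula together with a labelling function. -/
structure LCNF (V L : Type) where
  F : Finset (Clause V)
  lab : Clause V → Finset L

variable {V L : Type} [DecidableEq V] [DecidableEq L]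

/-- The set of active labels λ(Φ). -/
def LCNF.active (Φ : LCNF V L) : Finset L := Φ.F.biUnion Φ.lab

/-- Clause set of the induced subformula Φ|_S : clauses all of whose labels lie in S. -/
def LCNF.restrict (Φ : LCNF V L) (S : Finset L) : Finset (Clause V) :=
  Φ.F.filter (fun c => Φ.lab c ⊆ S)

/-- Φ|_S ≡ Φ. -/
def LCNF.EquivTo (Φ : LCNF V L) (S : Finset L) : Prop :=
  Equiv (Φ.restrict S) Φ.F

/-- A label is redundant in Φ if removing it keeps the formula equivalent. -/
def LCNF.Redundant (Φ : LCNF V L) (l : L) : Prop :=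
  Φ.EquivTo (Φ.active.erase l)

/-- Labelled minimal equivalent subset. -/
def LCNF.LMES (Φ : LCNF V L) (S : Finset L) : Prop :=
  S ⊆ Φ.active ∧ Φ.EquivTo S ∧ ∀ S' ⊂ S, ¬ Φ.EquivTo S'

/-- Labelled maximal non-equivalent subset. -/
def LCNF.LMNS (Φ : LCNF V L) (S : Finset L) : Prop :=
  S ⊆ Φ.active ∧ ¬ Φ.EquivTo S ∧ ∀ S', S ⊂ S' → S' ⊆ Φ.active → Φ.EquivTo S'

/-- Labelled maximal satisfiable subset. -/
def LCNF.LMSS (Φ : LCNF V L) (S : Finset L) : Prop :=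
  S ⊆ Φ.active ∧ (∃ τ, Sat τ (Φ.restrict S)) ∧
    ∀ S', S ⊂ S' → S' ⊆ Φ.active → ¬ ∃ τ, Sat τ (Φ.restrict S')

/-- Hitting set of a collection of finite sets. -/
def HittingSet {α : Type} [DecidableEq α] (𝒮 : Set (Finset α)) (H : Finset α) : Prop :=
  ∀ A ∈ 𝒮, (H ∩ A).Nonempty

/-- Irreducible hitting set. -/
def IrredHittingSet {α : Type} [DecidableEq α] (𝒮 : Set (Finset α)) (H : Finset α) : Prop :=
  HittingSet 𝒮 H ∧ ∀ H' ⊂ H, ¬ HittingSet 𝒮 H'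


lemma restrict_mono (Φ : LCNF V L) {S T : Finset L} (h : S ⊆ T) :
    Φ.restrict S ⊆ Φ.restrict T := by
  intro c hc
  rw [LCNF.restrict, Finset.mem_filter] at hc ⊢
  exact ⟨hc.1, hc.2.trans h⟩

lemma equivTo_active (Φ : LCNF V L) : Φ.EquivTo Φ.active := by
  intro τ
  constructor
  · intro h c hc
    exact h c (Finset.mem_filter.mpr ⟨hc, fun l hl => Finset.mem_biUnion.mpr ⟨c, hc, hl⟩⟩)
  · intro h c hc
    exact h c (Finset.mem_filter.mp hc).1

lemma equivTo_mono (Φ : LCNF V L) {S T : Finset L} (h : S ⊆ T) (he : Φ.EquivTo S) :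
    Φ.EquivTo T := by
  intro τ
  constructor
  · intro hs
    exact (he τ).1 (fun c hc => hs c (restrict_mono Φ h hc))
  · intro hf c hc
    exact hf c (Finset.filter_subset _ _ hc)

lemma exists_lmns_aux (Φ : LCNF V L) (n : ℕ) :
    ∀ S : Finset L, (Φ.active \ S).card ≤ n → S ⊆ Φ.active → ¬ Φ.EquivTo S →
      ∃ T, S ⊆ T ∧ Φ.LMNS T := by
  induction n with
  | zero =>
    intro S hcard hsub hne
    exfalso
    have : Φ.active \ S = ∅ := Finset.card_eq_zero.mp (Nat.le_zero.mp hcard)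
    have hSeq : S = Φ.active :=
      Finset.Subset.antisymm hsub (fun x hx => by
        by_contra hxS
        exact absurd (Finset.mem_sdiff.mpr ⟨hx, hxS⟩) (by simp [this]))
    exact hne (hSeq ▸ equivTo_active Φ)
  | succ n ih =>
    intro S hcard hsub hne
    by_cases h : ∀ S', S ⊂ S' → S' ⊆ Φ.active → Φ.EquivTo S'
    · exact ⟨S, Finset.Subset.refl S, hsub, hne, h⟩
    · push_neg at h
      obtain ⟨S', hSS', hS'sub, hS'ne⟩ := h
      obtain ⟨x, hxS', hxS⟩ := Finset.exists_of_ssubset hSS'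
      have hlt : (Φ.active \ S').card < (Φ.active \ S).card := by
        apply Finset.card_lt_card
        constructor
        · exact Finset.sdiff_subset_sdiff (Finset.Subset.refl _) hSS'.subset
        · intro hcon
          have : x ∈ Φ.active \ S' := hcon (Finset.mem_sdiff.mpr ⟨hS'sub hxS', hxS⟩)
          exact (Finset.mem_sdiff.mp this).2 hxS'
      obtain ⟨T, hT1, hT2⟩ := ih S' (Nat.lt_succ_iff.mp (lt_of_lt_of_le hlt hcard)) hS'sub hS'ne
      exact ⟨T, hSS'.subset.trans hT1, hT2⟩

lemma exists_lmns (Φ : LCNF V L) {S : Finset L} (hsub : S ⊆ Φ.active)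
    (hne : ¬ Φ.EquivTo S) : ∃ T, S ⊆ T ∧ Φ.LMNS T :=
  exists_lmns_aux Φ (Φ.active \ S).card S le_rfl hsub hne

theorem irred_hs_of_colmns_is_lmes {V L : Type} [DecidableEq V] [DecidableEq L]
    (Φ : LCNF V L) (hne : Φ.active.Nonempty)
    (hunlab : (∃ c ∈ Φ.F, Φ.lab c = ∅) → ∃ l ∈ Φ.active, ¬ Φ.Redundant l)
    (U : Finset L) (hU : U ⊆ Φ.active)
    (hhs : IrredHittingSet {M | M ⊆ Φ.active ∧ Φ.LMNS (Φ.active \ M)} U) :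
    Φ.LMES U := by
  obtain ⟨hhit, hirr⟩ := hhs
  have hequiv : Φ.EquivTo U := by
    by_contra hneU
    obtain ⟨T, hUT, hTsub, hTne, hTmax⟩ := exists_lmns Φ hU hneU
    have hM : (Φ.active \ T) ∈ {M | M ⊆ Φ.active ∧ Φ.LMNS (Φ.active \ M)} := by
      refine ⟨Finset.sdiff_subset, ?_⟩
      rw [Finset.sdiff_sdiff_eq_self hTsub]
      exact ⟨hTsub, hTne, hTmax⟩
    obtain ⟨x, hx⟩ := hhit _ hM
    rw [Finset.mem_inter, Finset.mem_sdiff] at hx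
    exact hx.2.2 (hUT hx.1)
  refine ⟨hU, hequiv, ?_⟩
  intro S' hS' hS'eq
  obtain ⟨M, hMmem, hMdisj⟩ := by
    have := hirr S' hS'
    unfold HittingSet at this
    push_neg at this
    exact this
  have hS'T : S' ⊆ Φ.active \ M := by
    intro x hx
    refine Finset.mem_sdiff.mpr ⟨hU (hS'.subset hx), ?_⟩
    intro hxM
    have : x ∈ S' ∩ M := Finset.mem_inter.mpr ⟨hx, hxM⟩
    simp [hMdisj] at this
  exact hMmem.2.2.1 (equivTo_mono Φ hS'T hS'eq)

end LCNFStmt
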